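/- Let P be a probability measure on ℝ^p and let c : [0,1]^p → ℝ be Lebesgue-integrable. Suppose f ∈ L²(P) satisfies, for P-almost every x, f(x) = ∫_{[0,1]^p} c(t) · ∏_{j=1}^p 1(t_j ≤ x_j) dt (the anchored mixed-derivative integral representation, with c playing the role of the highest-order mixed partial derivative D_{(1,…,1)}f). Let 𝒟 ⊆ L²(P) be the dictionary of all g of the form g(x) = ∏_{j=1}^p h_j(x_j) with each h_j : ℝ → ℝ≥0 a nonnegative step function (piecewise constant on a finite partition of ℝ into intervals), g ≥ 0, and ‖g‖_{L²(P)} = 1. Let (f_r)_{r≥0} be an orthogonal greedy approximation sequence: f₀ = 0, and for each ℓ ≥ 1 there is g_ℓ ∈ 𝒟 with |⟨f − f_{ℓ−1}, g_ℓ⟩_{L²(P)}| = sup_{g ∈ 𝒟} |⟨f − f_{ℓ−1}, g⟩_{L²(P)}|, and f_ℓ is the orthogonal projection of f onto the span of {g₁, …, g_ℓ}. Then for every r ≥ 1, ‖f − f_r‖_{L²(P)} ≤ 2·‖c‖_{L¹([0,1]^p)} / √r. -/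

import Mathlib

open MeasureTheory

/-- The separable indicator product `h_t(x) = ∏_j 1(t_j ≤ x_j)`. -/
noncomputable def sepIndicator (p : ℕ) (t x : Fin p → ℝ) : ℝ :=
  ∏ j, if t j ≤ x j then (1 : ℝ) else 0

/-- A step function on `ℝ`: a function that is constant on each member of a
finite partition of `ℝ` into intervals (order-connected sets). -/
def IsStepFunction (h : ℝ → ℝ) : Prop :=
  ∃ (n : ℕ) (I : Fin n → Set ℝ),
    (∀ i, (I i).OrdConnected) ∧
    (Pairwise fun i j => Disjoint (I i) (I j)) ∧
    (⋃ i, I i) = Set.univ ∧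
    ∀ i, ∀ x ∈ I i, ∀ y ∈ I i, h x = h y

/-- The unit cube `[0,1]^p`. -/
def unitBox (p : ℕ) : Set (Fin p → ℝ) := Set.univ.pi fun _ => Set.Icc (0 : ℝ) 1

/- ### Auxiliary lemmas -/

lemma isStep_aux (a α : ℝ) : IsStepFunction (fun s => α * (if a ≤ s then 1 else 0)) := by
  refine ⟨2, fun i => if i = 0 then Set.Iio a else Set.Ici a, ?_, ?_, ?_, ?_⟩
  · intro i
    by_cases h : i = 0
    · simp only [h, ite_true]; exact Set.ordConnected_Iio
    · simp only [if_neg h]; exact Set.ordConnected_Ici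
  · intro i j hij
    fin_cases i <;> fin_cases j <;> simp_all
  · apply Set.eq_univ_of_forall
    intro s
    rcases lt_or_ge s a with h | h
    · exact Set.mem_iUnion.2 ⟨0, by simpa using h⟩
    · exact Set.mem_iUnion.2 ⟨1, by simpa using h⟩
  · intro i x hx y hy
    by_cases h : i = 0
    · simp only [h, ite_true] at hx hy
      simp only [Set.mem_Iio] at hx hy
      simp only [if_neg (not_le.2 hx), if_neg (not_le.2 hy)]
    · simp only [if_neg h] at hx hy
      simp only [Set.mem_Ici] at hx hy
      simp only [if_pos hx, if_pos hy]

lemma sep_meas (p : ℕ) :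
    Measurable fun q : ((Fin p → ℝ) × (Fin p → ℝ)) => sepIndicator p q.1 q.2 := by
  unfold sepIndicator
  exact Finset.measurable_prod _ fun j _ =>
    Measurable.ite (measurableSet_le (measurable_fst.eval) (measurable_snd.eval))
      measurable_const measurable_const

lemma sep_meas' (p : ℕ) (t : Fin p → ℝ) : Measurable (sepIndicator p t) :=
  (sep_meas p).comp measurable_prodMk_left

lemma sep_nonneg (p : ℕ) (t x : Fin p → ℝ) : 0 ≤ sepIndicator p t x :=
  Finset.prod_nonneg fun j _ => by split <;> norm_num

lemma sep_le_one (p : ℕ) (t x : Fin p → ℝ) : sepIndicator p t x ≤ 1 :=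
  Finset.prod_le_one (fun j _ => by split <;> norm_num) (fun j _ => by split <;> norm_num)

lemma sep_memLp (p : ℕ) (P : Measure (Fin p → ℝ)) [IsProbabilityMeasure P] (t : Fin p → ℝ) :
    MemLp (sepIndicator p t) 2 P :=
  MemLp.of_bound (sep_meas' p t).aestronglyMeasurable 1
    (Filter.Eventually.of_forall fun x => by
      rw [Real.norm_eq_abs, abs_of_nonneg (sep_nonneg p t x)]; exact sep_le_one p t x)

lemma sep_norm_le (p : ℕ) (P : Measure (Fin p → ℝ)) [IsProbabilityMeasure P] (t : Fin p → ℝ) :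
    ‖(sep_memLp p P t).toLp (sepIndicator p t)‖ ≤ 1 := by
  rw [Lp.norm_toLp]
  have h := eLpNorm_le_of_ae_bound (C := 1) (p := 2) (μ := P)
    (f := sepIndicator p t) (Filter.Eventually.of_forall fun x => by
      rw [Real.norm_eq_abs, abs_of_nonneg (sep_nonneg p t x)]; exact sep_le_one p t x)
  simp only [measure_univ, ENNReal.one_rpow, one_mul, ENNReal.ofReal_one] at h
  calc (eLpNorm (sepIndicator p t) 2 P).toReal ≤ (1 : ENNReal).toReal :=
        ENNReal.toReal_mono ENNReal.one_ne_top h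
    _ = 1 := by simp

lemma inner_eq_integral (p : ℕ) (P : Measure (Fin p → ℝ)) [IsProbabilityMeasure P]
    (r q : Lp ℝ 2 P) :
    (inner ℝ r q : ℝ) = ∫ x, (r : (Fin p → ℝ) → ℝ) x * (q : (Fin p → ℝ) → ℝ) x ∂P := by
  rw [L2.inner_def]
  simp [RCLike.inner_apply]
  exact integral_congr_ae (Filter.Eventually.of_forall fun x => mul_comm _ _)

lemma key_repr (p : ℕ) (P : Measure (Fin p → ℝ)) [IsProbabilityMeasure P]
    (c : (Fin p → ℝ) → ℝ) (hc : IntegrableOn c (unitBox p) volume)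
    (f : Lp ℝ 2 P)
    (hf : ∀ᵐ x ∂P, (f : (Fin p → ℝ) → ℝ) x
        = ∫ t in unitBox p, c t * sepIndicator p t x ∂volume)
    (r : Lp ℝ 2 P) :
    Integrable (fun t => c t * ∫ x, (r : (Fin p → ℝ) → ℝ) x * sepIndicator p t x ∂P)
      (volume.restrict (unitBox p)) ∧
    (inner ℝ r f : ℝ) = ∫ t in unitBox p,
      c t * ∫ x, (r : (Fin p → ℝ) → ℝ) x * sepIndicator p t x ∂P ∂volume := by
  have hrint : Integrable (r : (Fin p → ℝ) → ℝ) P := (Lp.memLp r).integrable one_le_two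
  have hsm : AEStronglyMeasurable
      (fun z : (Fin p → ℝ) × (Fin p → ℝ) =>
        (r : (Fin p → ℝ) → ℝ) z.1 * (c z.2 * sepIndicator p z.2 z.1))
      (P.prod (volume.restrict (unitBox p))) := by
    refine (Lp.aestronglyMeasurable r).comp_fst.mul (AEStronglyMeasurable.mul ?_ ?_)
    · exact hc.aestronglyMeasurable.comp_snd
    · exact (Measurable.aestronglyMeasurable ((sep_meas p).comp measurable_swap))
  have hprod : Integrable
      (fun z : (Fin p → ℝ) × (Fin p → ℝ) =>
        (r : (Fin p → ℝ) → ℝ) z.1 * (c z.2 * sepIndicator p z.2 z.1))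
      (P.prod (volume.restrict (unitBox p))) := by
    have hdom : Integrable (fun z : (Fin p → ℝ) × (Fin p → ℝ) =>
        (r : (Fin p → ℝ) → ℝ) z.1 * c z.2)
        (P.prod (volume.restrict (unitBox p))) := hrint.mul_prod hc
    refine hdom.mono hsm (Filter.Eventually.of_forall fun z => ?_)
    simp only [norm_mul]
    have h1 : ‖sepIndicator p z.2 z.1‖ ≤ 1 := by
      rw [Real.norm_eq_abs, abs_of_nonneg (sep_nonneg p z.2 z.1)]
      exact sep_le_one p z.2 z.1
    calc ‖(r : (Fin p → ℝ) → ℝ) z.1‖ * (‖c z.2‖ * ‖sepIndicator p z.2 z.1‖)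
        ≤ ‖(r : (Fin p → ℝ) → ℝ) z.1‖ * (‖c z.2‖ * 1) := by
          gcongr
      _ = ‖(r : (Fin p → ℝ) → ℝ) z.1‖ * ‖c z.2‖ := by ring
  have hform : ∀ t, (∫ x, (r : (Fin p → ℝ) → ℝ) x * (c t * sepIndicator p t x) ∂P)
      = c t * ∫ x, (r : (Fin p → ℝ) → ℝ) x * sepIndicator p t x ∂P := by
    intro t
    rw [← integral_const_mul]
    congr 1; funext x; ring
  constructor
  · have h2 := hprod.integral_prod_right
    refine h2.congr (Filter.Eventually.of_forall fun t => ?_)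
    exact hform t
  · rw [inner_eq_integral]
    have h1 : (∫ x, (r : (Fin p → ℝ) → ℝ) x * (f : (Fin p → ℝ) → ℝ) x ∂P)
        = ∫ x, ∫ t in unitBox p,
            (r : (Fin p → ℝ) → ℝ) x * (c t * sepIndicator p t x) ∂volume ∂P := by
      refine integral_congr_ae (hf.mono fun x hx => ?_)
      dsimp only
      rw [hx, ← integral_const_mul]
    rw [h1]
    rw [integral_integral_swap hprod]
    exact integral_congr_ae (Filter.Eventually.of_forall fun t => hform t)

lemma dict_bound (p : ℕ) (P : Measure (Fin p → ℝ)) [IsProbabilityMeasure P]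
    (𝒟 : Set (Lp ℝ 2 P))
    (h𝒟 : 𝒟 = {g : Lp ℝ 2 P | (∃ h : Fin p → ℝ → ℝ,
        (∀ j, IsStepFunction (h j)) ∧ (∀ j s, 0 ≤ h j s) ∧
        (g : (Fin p → ℝ) → ℝ) =ᵐ[P] fun x => ∏ j, h j (x j)) ∧
        (∀ᵐ x ∂P, 0 ≤ (g : (Fin p → ℝ) → ℝ) x) ∧ ‖g‖ = 1})
    (r : Lp ℝ 2 P) (M : ℝ) (hM : 0 ≤ M)
    (hle : ∀ g' ∈ 𝒟, |(inner ℝ r g' : ℝ)| ≤ M) (t : Fin p → ℝ) :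
    |∫ x, (r : (Fin p → ℝ) → ℝ) x * sepIndicator p t x ∂P| ≤ M := by
  set H : Lp ℝ 2 P := (sep_memLp p P t).toLp (sepIndicator p t) with hH
  have hinnerH : (inner ℝ r H : ℝ) = ∫ x, (r : (Fin p → ℝ) → ℝ) x * sepIndicator p t x ∂P := by
    rw [inner_eq_integral]
    refine integral_congr_ae (((sep_memLp p P t).coeFn_toLp).mono fun x hx => ?_)
    simp only [hH, hx]
  rw [← hinnerH]
  by_cases hzero : ‖H‖ = 0
  · rw [norm_eq_zero] at hzero
    rw [hzero, inner_zero_right]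
    simpa using hM
  · set α : ℝ := ‖H‖⁻¹ with hα
    have hαpos : 0 < α := by
      rw [hα]
      exact inv_pos.2 (lt_of_le_of_ne (norm_nonneg H) (Ne.symm hzero))
    set g' : Lp ℝ 2 P := α • H with hg'
    have hnormg' : ‖g'‖ = 1 := by
      rw [hg', norm_smul, Real.norm_eq_abs, abs_of_pos hαpos, hα,
        inv_mul_cancel₀ hzero]
    have hcoe : (g' : (Fin p → ℝ) → ℝ) =ᵐ[P] fun x => α * sepIndicator p t x := by
      refine (Lp.coeFn_smul α H).trans ?_
      refine ((sep_memLp p P t).coeFn_toLp).mono fun x hx => ?_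
      simp only [Pi.smul_apply, hH, hx, smul_eq_mul]
    have hmem : g' ∈ 𝒟 := by
      rw [h𝒟]
      refine ⟨?_, ?_, hnormg'⟩
      · -- separable step representation
        rcases Nat.eq_zero_or_pos p with hp | hp
        · -- p = 0 : the constant function 1
          subst hp
          have hsep1 : ∀ x : Fin 0 → ℝ, sepIndicator 0 t x = 1 := fun x => by
            simp [sepIndicator]
          have hH1 : ‖H‖ = 1 := by
            rw [hH, Lp.norm_toLp]
            have : eLpNorm (sepIndicator 0 t) 2 P = eLpNorm (fun _ => (1 : ℝ)) 2 P :=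
              eLpNorm_congr_ae (Filter.Eventually.of_forall hsep1)
            rw [this, eLpNorm_const (1 : ℝ) (by norm_num) (IsProbabilityMeasure.ne_zero P)]
            simp
          refine ⟨fun j => fun _ => 1, fun j => j.elim0, fun j => j.elim0, ?_⟩
          refine hcoe.mono fun x hx => ?_
          simp only [hx, hsep1 x, Finset.univ_eq_empty, Finset.prod_empty, hα, hH1]
          norm_num
        · -- p ≥ 1
          set j0 : Fin p := ⟨0, hp⟩ with hj0
          refine ⟨fun j => fun s => (if j = j0 then α else 1) * (if t j ≤ s then 1 else 0),
            fun j => isStep_aux (t j) _, fun j s => ?_, ?_⟩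
          · refine mul_nonneg ?_ (by split <;> norm_num)
            split
            · exact le_of_lt hαpos
            · norm_num
          · refine hcoe.mono fun x hx => ?_
            rw [hx]
            dsimp only
            rw [Finset.prod_mul_distrib, Finset.prod_ite_eq' Finset.univ j0 (fun _ => α)]
            simp [sepIndicator]
      · exact hcoe.mono fun x hx => by
          rw [hx]; exact mul_nonneg (le_of_lt hαpos) (sep_nonneg p t x)
    have hkey : (inner ℝ r H : ℝ) = ‖H‖ * (inner ℝ r g' : ℝ) := by
      rw [hg', real_inner_smul_right, hα]
      field_simp
    rw [hkey, abs_mul, abs_of_nonneg (norm_nonneg H)]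
    calc ‖H‖ * |(inner ℝ r g' : ℝ)| ≤ 1 * M := by
          refine mul_le_mul ?_ (hle g' hmem) (abs_nonneg _) zero_le_one
          rw [hH]; exact sep_norm_le p P t
      _ = M := one_mul M

lemma rec_step_arith (B an an1 lam n1 : ℝ) (hBpos : 0 < B) (han : 0 ≤ an) (han1 : 0 ≤ an1)
    (h1 : an ≤ B * |lam|) (h2 : an1 ≤ an - lam ^ 2) (hn1 : 1 ≤ n1)
    (ih : an * n1 ≤ B ^ 2) : an1 * (n1 + 1) ≤ B ^ 2 := by
  have hB2 : (0:ℝ) < B ^ 2 := by positivity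
  have hansq : an * an ≤ (B * |lam|) * (B * |lam|) := mul_self_le_mul_self han h1
  have hansq' : an * an ≤ B ^ 2 * lam ^ 2 := by nlinarith [hansq, sq_abs lam]
  have haB : an ≤ B ^ 2 := by nlinarith
  have hfact : 0 ≤ (B ^ 2 - n1 * an) * (B ^ 2 - an) :=
    mul_nonneg (by nlinarith) (by linarith)
  have hA : B ^ 2 * an1 ≤ B ^ 2 * an - an * an := by
    nlinarith [mul_le_mul_of_nonneg_left h2 (le_of_lt hB2), hansq']
  have hC : (n1 + 1) * (B ^ 2 * an1) ≤ (n1 + 1) * (B ^ 2 * an - an * an) :=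
    mul_le_mul_of_nonneg_left hA (by linarith)
  have hgoal : an1 * (n1 + 1) * B ^ 2 ≤ B ^ 2 * B ^ 2 := by nlinarith [hfact, hC]
  exact le_of_mul_le_mul_right hgoal hB2

/-- **Approximation rate of the orthogonal greedy algorithm over the positive
separable dictionary.** -/
theorem oga_separable_rate
    (p : ℕ) (P : Measure (Fin p → ℝ)) [IsProbabilityMeasure P]
    (c : (Fin p → ℝ) → ℝ)
    (hc : IntegrableOn c (unitBox p) volume)
    (f : Lp ℝ 2 P)
    (hf : ∀ᵐ x ∂P, (f : (Fin p → ℝ) → ℝ) x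
        = ∫ t in unitBox p, c t * sepIndicator p t x ∂volume)
    (𝒟 : Set (Lp ℝ 2 P))
    (h𝒟 : 𝒟 = {g : Lp ℝ 2 P | (∃ h : Fin p → ℝ → ℝ,
        (∀ j, IsStepFunction (h j)) ∧ (∀ j s, 0 ≤ h j s) ∧
        (g : (Fin p → ℝ) → ℝ) =ᵐ[P] fun x => ∏ j, h j (x j)) ∧
        (∀ᵐ x ∂P, 0 ≤ (g : (Fin p → ℝ) → ℝ) x) ∧ ‖g‖ = 1})
    (F : ℕ → Lp ℝ 2 P) (g : ℕ → Lp ℝ 2 P)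
    (hF0 : F 0 = 0)
    (hsel : ∀ ℓ : ℕ, 1 ≤ ℓ → g ℓ ∈ 𝒟 ∧
      ∀ g' ∈ 𝒟, |(inner ℝ (f - F (ℓ - 1)) g' : ℝ)| ≤ |(inner ℝ (f - F (ℓ - 1)) (g ℓ) : ℝ)|)
    (hproj : ∀ ℓ : ℕ, 1 ≤ ℓ →
      F ℓ ∈ Submodule.span ℝ (g '' {k | 1 ≤ k ∧ k ≤ ℓ}) ∧
      ∀ v ∈ Submodule.span ℝ (g '' {k | 1 ≤ k ∧ k ≤ ℓ}),
        (inner ℝ (f - F ℓ) v : ℝ) = 0) :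
    ∀ r : ℕ, 1 ≤ r →
      ‖f - F r‖ ≤ 2 * (∫ t in unitBox p, |c t| ∂volume) / Real.sqrt r := by
  set B : ℝ := ∫ t in unitBox p, |c t| ∂volume with hB
  have hB0 : 0 ≤ B := integral_nonneg fun t => abs_nonneg _
  set a : ℕ → ℝ := fun ℓ => ‖f - F ℓ‖ ^ 2 with ha
  have ha0 : ∀ ℓ, 0 ≤ a ℓ := fun ℓ => sq_nonneg _
  have hnormg : ∀ ℓ : ℕ, 1 ≤ ℓ → ‖g ℓ‖ = 1 := by
    intro ℓ hℓ
    have h1 := (hsel ℓ hℓ).1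
    rw [h𝒟] at h1
    exact h1.2.2
  -- residual inner-product identity
  have hresf : ∀ ℓ : ℕ, (inner ℝ (f - F ℓ) f : ℝ) = a ℓ := by
    intro ℓ
    rcases Nat.eq_zero_or_pos ℓ with h0 | hℓ
    · subst h0
      rw [hF0, sub_zero, real_inner_self_eq_norm_sq, ha]
      simp [hF0]
    · have h1 : (inner ℝ (f - F ℓ) (F ℓ) : ℝ) = 0 :=
        (hproj ℓ hℓ).2 (F ℓ) (hproj ℓ hℓ).1
      have h2 : f = (f - F ℓ) + F ℓ := by abel
      calc (inner ℝ (f - F ℓ) f : ℝ) = inner ℝ (f - F ℓ) ((f - F ℓ) + F ℓ) := by rw [← h2]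
        _ = (inner ℝ (f - F ℓ) (f - F ℓ) : ℝ) + inner ℝ (f - F ℓ) (F ℓ) := inner_add_right _ _ _
        _ = a ℓ := by rw [h1, real_inner_self_eq_norm_sq, add_zero]
  -- correlation bound
  have hcorr : ∀ ℓ : ℕ, a ℓ ≤ B * |(inner ℝ (f - F ℓ) (g (ℓ + 1)) : ℝ)| := by
    intro ℓ
    set r : Lp ℝ 2 P := f - F ℓ with hr
    set M : ℝ := |(inner ℝ r (g (ℓ + 1)) : ℝ)| with hM
    have hmax : ∀ g' ∈ 𝒟, |(inner ℝ r g' : ℝ)| ≤ M := by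
      have h1 := (hsel (ℓ + 1) (by omega)).2
      simpa [Nat.add_sub_cancel] using h1
    have hbd := dict_bound p P 𝒟 h𝒟 r M (abs_nonneg _) hmax
    have hk := key_repr p P c hc f hf r
    have hest : (inner ℝ r f : ℝ) ≤ B * M := by
      rw [hk.2]
      have hint2 : Integrable (fun t => |c t| * M) (volume.restrict (unitBox p)) :=
        hc.abs.mul_const M
      calc (∫ t in unitBox p,
              c t * ∫ x, (r : (Fin p → ℝ) → ℝ) x * sepIndicator p t x ∂P ∂volume)
          ≤ ∫ t in unitBox p, |c t| * M ∂volume := by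
            refine integral_mono hk.1 hint2 fun t => ?_
            calc c t * ∫ x, (r : (Fin p → ℝ) → ℝ) x * sepIndicator p t x ∂P
                ≤ |c t * ∫ x, (r : (Fin p → ℝ) → ℝ) x * sepIndicator p t x ∂P| :=
                  le_abs_self _
              _ = |c t| * |∫ x, (r : (Fin p → ℝ) → ℝ) x * sepIndicator p t x ∂P| :=
                  abs_mul _ _
              _ ≤ |c t| * M := by
                  exact mul_le_mul_of_nonneg_left (hbd t) (abs_nonneg _)
        _ = B * M := by rw [integral_mul_const, hB]
    calc a ℓ = (inner ℝ r f : ℝ) := (hresf ℓ).symm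
      _ ≤ B * M := hest
  -- one-step energy decrease
  have hstep : ∀ ℓ : ℕ, a (ℓ + 1) ≤ a ℓ - (inner ℝ (f - F ℓ) (g (ℓ + 1)) : ℝ) ^ 2 := by
    intro ℓ
    set lam : ℝ := (inner ℝ (f - F ℓ) (g (ℓ + 1)) : ℝ) with hlam
    set S := Submodule.span ℝ (g '' {k | 1 ≤ k ∧ k ≤ ℓ + 1}) with hS
    have hgS : g (ℓ + 1) ∈ S :=
      Submodule.subset_span ⟨ℓ + 1, ⟨by omega, le_rfl⟩, rfl⟩
    have hFS : F ℓ ∈ S := by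
      rcases Nat.eq_zero_or_pos ℓ with h0 | hℓ
      · subst h0; rw [hF0]; exact S.zero_mem
      · refine Submodule.span_mono (Set.image_mono fun k hk => ?_) (hproj ℓ hℓ).1
        exact ⟨hk.1, Nat.le_succ_of_le hk.2⟩
    have hwS : F ℓ + lam • g (ℓ + 1) ∈ S := S.add_mem hFS (S.smul_mem _ hgS)
    have hperp : (inner ℝ (f - F (ℓ + 1)) (F (ℓ + 1) - (F ℓ + lam • g (ℓ + 1))) : ℝ) = 0 :=
      (hproj (ℓ + 1) (by omega)).2 _ (S.sub_mem (hproj (ℓ + 1) (by omega)).1 hwS)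
    have e1 : ‖f - (F ℓ + lam • g (ℓ + 1))‖ ^ 2
        = a (ℓ + 1) + ‖F (ℓ + 1) - (F ℓ + lam • g (ℓ + 1))‖ ^ 2 := by
      have hdecomp : f - (F ℓ + lam • g (ℓ + 1))
          = (f - F (ℓ + 1)) + (F (ℓ + 1) - (F ℓ + lam • g (ℓ + 1))) := by abel
      rw [hdecomp, norm_add_sq_real, hperp]
      ring
    have e2 : ‖f - (F ℓ + lam • g (ℓ + 1))‖ ^ 2 = a ℓ - lam ^ 2 := by
      have hdecomp : f - (F ℓ + lam • g (ℓ + 1)) = (f - F ℓ) - lam • g (ℓ + 1) := by abel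
      rw [hdecomp, norm_sub_sq_real, real_inner_smul_right, ← hlam, norm_smul,
        hnormg (ℓ + 1) (by omega), mul_one, Real.norm_eq_abs, sq_abs]
      ring
    have e3 : 0 ≤ ‖F (ℓ + 1) - (F ℓ + lam • g (ℓ + 1))‖ ^ 2 := sq_nonneg _
    linarith [e1, e2, e3]
  -- the recursion  a ℓ · (ℓ+1) ≤ B²
  have hrec : ∀ ℓ : ℕ, a ℓ * ((ℓ : ℝ) + 1) ≤ B ^ 2 := by
    intro ℓ
    induction ℓ with
    | zero =>
      have h1 := hcorr 0
      have h2 : |(inner ℝ (f - F 0) (g 1) : ℝ)| ≤ ‖f - F 0‖ * ‖g 1‖ :=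
        abs_real_inner_le_norm _ _
      rw [hnormg 1 le_rfl, mul_one] at h2
      have h3 : a 0 ≤ B * ‖f - F 0‖ :=
        h1.trans (mul_le_mul_of_nonneg_left h2 hB0)
      have h4 : a 0 = ‖f - F 0‖ ^ 2 := rfl
      push_cast
      nlinarith [norm_nonneg (f - F 0), sq_nonneg (‖f - F 0‖ - B)]
    | succ n ih =>
      set lam : ℝ := (inner ℝ (f - F n) (g (n + 1)) : ℝ) with hlam
      have h1 : a n ≤ B * |lam| := hcorr n
      have h2 : a (n + 1) ≤ a n - lam ^ 2 := hstep n
      have hL0 : 0 ≤ |lam| := abs_nonneg _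
      have hsq : lam ^ 2 = |lam| ^ 2 := (sq_abs lam).symm
      rcases eq_or_lt_of_le hB0 with hBz | hBpos
      · -- B = 0
        have hB' : B = 0 := hBz.symm
        have han : a n = 0 := le_antisymm (by rw [hB'] at h1; simpa using h1) (ha0 n)
        have h5 : a (n + 1) = 0 := by
          refine le_antisymm ?_ (ha0 (n + 1))
          have := sq_nonneg lam
          linarith
        rw [h5, zero_mul]
        positivity
      · -- B > 0
        have hn1 : (1:ℝ) ≤ (n : ℝ) + 1 := by
          have : (0:ℝ) ≤ (n : ℝ) := Nat.cast_nonneg n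
          linarith
        have hdiv := rec_step_arith B (a n) (a (n + 1)) lam ((n : ℝ) + 1)
          hBpos (ha0 n) (ha0 (n + 1)) h1 h2 hn1 ih
        push_cast
        linarith [hdiv]
  -- conclusion
  intro r hr
  have hrpos : (0:ℝ) < (r : ℝ) := by exact_mod_cast Nat.lt_of_lt_of_le Nat.zero_lt_one hr
  have hsr : 0 < Real.sqrt r := Real.sqrt_pos.2 hrpos
  rw [le_div_iff₀ hsr]
  have h1 : a r * (r : ℝ) ≤ B ^ 2 := by
    have h2 := hrec r
    nlinarith [ha0 r]
  have h3 : (‖f - F r‖ * Real.sqrt r) ^ 2 ≤ (2 * B) ^ 2 := by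
    rw [mul_pow, Real.sq_sqrt (le_of_lt hrpos)]
    have : ‖f - F r‖ ^ 2 * (r : ℝ) = a r * (r : ℝ) := rfl
    rw [this]
    nlinarith [hB0]
  have h4 : 0 ≤ ‖f - F r‖ * Real.sqrt r := mul_nonneg (norm_nonneg _) (le_of_lt hsr)
  have h5 : 0 ≤ 2 * B := by linarith
  nlinarith [h3, h4, h5]
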